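/- If the sum of distances from points to the three sides of a triangle takes the same value at three non-collinear interior points, then the triangle is equilateral. -/

import Mathlib

open Metric
open scoped RealInnerProductSpace

noncomputable section

abbrev E2 := EuclideanSpace ℝ (Fin 2)

section Helpers

open scoped RealInnerProductSpace


def Jv (v : E2) : E2 := WithLp.toLp 2 ![-(v 1), v 0]

def cross (u v : E2) : ℝ := u 0 * v 1 - u 1 * v 0

lemma inner2 (x y : E2) : ⟪x, y⟫ = x 0 * y 0 + x 1 * y 1 := by
  simp [PiLp.inner_apply, Fin.sum_univ_two, mul_comm]

lemma Jv_apply0 (v : E2) : Jv v 0 = -(v 1) := rfl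
lemma Jv_apply1 (v : E2) : Jv v 1 = v 0 := rfl

lemma inner_Jv (u w : E2) : ⟪Jv u, w⟫ = cross u w := by
  simp [inner2, Jv_apply0, Jv_apply1, cross]; ring

lemma norm_sq2 (u : E2) : ‖u‖ ^ 2 = u 0 ^ 2 + u 1 ^ 2 := by
  rw [← real_inner_self_eq_norm_sq, inner2]; ring

lemma norm_Jv (u : E2) : ‖Jv u‖ = ‖u‖ := by
  rw [EuclideanSpace.norm_eq, EuclideanSpace.norm_eq]
  congr 1
  simp [Fin.sum_univ_two, Jv_apply0, Jv_apply1]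
  ring

lemma normsq_ne (u : E2) (hu : u ≠ 0) : u 0 ^ 2 + u 1 ^ 2 ≠ 0 := by
  intro h
  apply hu
  have h0 : u 0 = 0 := by nlinarith [sq_nonneg (u 0), sq_nonneg (u 1)]
  have h1 : u 1 = 0 := by nlinarith [sq_nonneg (u 0), sq_nonneg (u 1)]
  ext i
  fin_cases i <;> simpa

lemma decomp (u v : E2) (hu : u ≠ 0) :
    v = (⟪u, v⟫ / ‖u‖ ^ 2) • u + (cross u v / ‖u‖ ^ 2) • Jv u := by
  have h := normsq_ne u hu
  rw [norm_sq2, inner2]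
  ext i
  fin_cases i <;>
  · simp [Jv_apply0, Jv_apply1, cross, PiLp.add_apply, PiLp.smul_apply, smul_eq_mul]
    field_simp
    ring

lemma infDist_line (X Y P : E2) (h : X ≠ Y) :
    infDist P (affineSpan ℝ {X, Y} : Set E2) = |cross (Y - X) (P - X)| / ‖Y - X‖ := by
  set u := Y - X with hu_def
  have hu : u ≠ 0 := sub_ne_zero.mpr (Ne.symm h)
  have hunorm : (0:ℝ) < ‖u‖ := norm_pos_iff.mpr hu
  set s : ℝ := ⟪u, P - X⟫ / ‖u‖ ^ 2
  set r : ℝ := cross u (P - X) / ‖u‖ ^ 2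
  set Q : E2 := s • u + X with hQ_def
  have hQmem : Q ∈ (affineSpan ℝ {X, Y} : Set E2) := by
    have h2 := smul_vsub_vadd_mem_affineSpan_pair s X Y
    exact h2
  have hPQ : P - Q = r • Jv u := by
    have hd := decomp u (P - X) hu
    have : P - X = s • u + r • Jv u := hd
    rw [hQ_def]
    rw [show P - (s • u + X) = P - X - s • u by abel, this]
    abel
  have hdistPQ : dist P Q = |cross u (P - X)| / ‖u‖ := by
    rw [dist_eq_norm, hPQ, norm_smul, norm_Jv, Real.norm_eq_abs]
    rw [show r = cross u (P - X) / ‖u‖ ^ 2 from rfl, abs_div]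
    rw [abs_of_nonneg (by positivity : (0:ℝ) ≤ ‖u‖ ^ 2)]
    field_simp
  have hlow : ∀ Z ∈ (affineSpan ℝ {X, Y} : Set E2),
      |cross u (P - X)| / ‖u‖ ≤ dist P Z := by
    intro Z hZ
    have hZX : Z - X ∈ vectorSpan ℝ ({X, Y} : Set E2) := by
      have := AffineSubspace.vsub_mem_direction hZ
        (left_mem_affineSpan_pair ℝ X Y)
      rwa [direction_affineSpan] at this
    obtain ⟨t, ht⟩ := mem_vectorSpan_pair_rev.mp hZX
    have hcr : cross u (P - Z) = cross u (P - X) := by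
      have hz2 : Z = t • u + X := sub_eq_iff_eq_add.mp ht.symm
      rw [hz2]
      simp [cross, PiLp.sub_apply, PiLp.add_apply, PiLp.smul_apply, smul_eq_mul]
      ring
    have hineq : |⟪Jv u, P - Z⟫| ≤ ‖Jv u‖ * ‖P - Z‖ := abs_real_inner_le_norm _ _
    rw [inner_Jv, hcr, norm_Jv] at hineq
    rw [div_le_iff₀ hunorm, dist_eq_norm]
    linarith [hineq]
  have hne : (affineSpan ℝ {X, Y} : Set E2).Nonempty :=
    ⟨X, left_mem_affineSpan_pair ℝ X Y⟩
  have : Nonempty ((affineSpan ℝ {X, Y} : Set E2)) := hne.to_subtype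
  apply le_antisymm
  · rw [← hdistPQ]; exact infDist_le_dist_of_mem hQmem
  · rw [infDist_eq_iInf]
    exact le_ciInf fun z => hlow z z.2

end Helpers

/-- The sum of the distances from a point `P` to the lines containing the three sides
of the triangle `ABC`. -/
def triSum (A B C P : E2) : ℝ :=
  infDist P (affineSpan ℝ {B, C} : Set E2) + infDist P (affineSpan ℝ {A, C} : Set E2)
    + infDist P (affineSpan ℝ {A, B} : Set E2)

section Helpers2
open scoped RealInnerProductSpace

lemma triSum_formula (A B C P : E2) (α β γ : ℝ) (hsum : α + β + γ = 1)
    (hP : α • A + β • B + γ • C = P)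
    (hα : 0 < α) (hβ : 0 < β) (hγ : 0 < γ)
    (hAB : A ≠ B) (hAC : A ≠ C) (hBC : B ≠ C) :
    triSum A B C P =
      |cross (B - A) (C - A)| * (α / ‖C - B‖ + β / ‖C - A‖ + γ / ‖B - A‖) := by
  have hγ' : γ = 1 - α - β := by linarith
  subst hγ'
  have hP0 : P 0 = α * A 0 + β * B 0 + (1 - α - β) * C 0 := by
    rw [← hP]; simp [PiLp.add_apply, PiLp.smul_apply, smul_eq_mul]
  have hP1 : P 1 = α * A 1 + β * B 1 + (1 - α - β) * C 1 := by
    rw [← hP]; simp [PiLp.add_apply, PiLp.smul_apply, smul_eq_mul]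
  have e1 : cross (C - B) (P - B) = α * cross (B - A) (C - A) := by
    simp only [cross, PiLp.sub_apply]
    rw [hP0, hP1]; ring
  have e2 : cross (C - A) (P - A) = -(β * cross (B - A) (C - A)) := by
    simp only [cross, PiLp.sub_apply]
    rw [hP0, hP1]; ring
  have e3 : cross (B - A) (P - A) = (1 - α - β) * cross (B - A) (C - A) := by
    simp only [cross, PiLp.sub_apply]
    rw [hP0, hP1]; ring
  rw [triSum, infDist_line B C P hBC, infDist_line A C P hAC, infDist_line A B P hAB,
    e1, e2, e3, abs_neg, abs_mul, abs_mul, abs_mul,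
    abs_of_pos hα, abs_of_pos hβ, abs_of_pos hγ]
  ring

end Helpers2

/-- If the sum of distances to the three sides takes the same value at three
non-collinear interior points, then the triangle is equilateral. -/
theorem equilateral_of_three_noncollinear (A B C : E2)
    (hABC : AffineIndependent ℝ ![A, B, C])
    (P₁ P₂ P₃ : E2)
    (hP₁ : P₁ ∈ interior (convexHull ℝ ({A, B, C} : Set E2)))
    (hP₂ : P₂ ∈ interior (convexHull ℝ ({A, B, C} : Set E2)))
    (hP₃ : P₃ ∈ interior (convexHull ℝ ({A, B, C} : Set E2)))
    (hind : AffineIndependent ℝ ![P₁, P₂, P₃])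
    (h12 : triSum A B C P₁ = triSum A B C P₂)
    (h23 : triSum A B C P₂ = triSum A B C P₃) :
    dist A B = dist B C ∧ dist B C = dist C A := by
  -- distinctness of vertices
  have hAB : A ≠ B := fun h =>
    (by decide : (0 : Fin 3) ≠ 1) (hABC.injective (show ![A,B,C] 0 = ![A,B,C] 1 by simpa))
  have hAC : A ≠ C := fun h =>
    (by decide : (0 : Fin 3) ≠ 2) (hABC.injective (show ![A,B,C] 0 = ![A,B,C] 2 by simpa))
  have hBC : B ≠ C := fun h =>
    (by decide : (1 : Fin 3) ≠ 2) (hABC.injective (show ![A,B,C] 1 = ![A,B,C] 2 by simpa))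
  -- the affine basis
  have htop : affineSpan ℝ (Set.range ![A, B, C]) = ⊤ :=
    hABC.affineSpan_eq_top_iff_card_eq_finrank_add_one.mpr
      (by simp [finrank_euclideanSpace_fin])
  let b : AffineBasis (Fin 3) ℝ E2 := ⟨![A, B, C], hABC, htop⟩
  have hb0 : b 0 = A := rfl
  have hb1 : b 1 = B := rfl
  have hb2 : b 2 = C := rfl
  have hr2 : Set.range ![A, B, C] = ({A, B, C} : Set E2) := by
    ext x
    simp [Matrix.range_cons, Matrix.range_empty]
    tauto
  have hbrange : Set.range (⇑b) = ({A, B, C} : Set E2) := hr2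
  -- positivity of coordinates
  have hposall : ∀ P : E2, P ∈ interior (convexHull ℝ ({A, B, C} : Set E2)) →
      ∀ i, 0 < b.coord i P := by
    intro P hP i
    rw [← hbrange, b.interior_convexHull] at hP
    exact hP i
  -- D ≠ 0
  set D : ℝ := cross (B - A) (C - A) with hD_def
  have hD : D ≠ 0 := by
    intro h0
    have hu : B - A ≠ 0 := sub_ne_zero.mpr (Ne.symm hAB)
    have hdec := decomp (B - A) (C - A) hu
    rw [← hD_def, h0] at hdec
    simp only [zero_div, zero_smul, add_zero] at hdec
    have hcol : Collinear ℝ ({A, B, C} : Set E2) := by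
      rw [collinear_iff_of_mem (Set.mem_insert A {B, C})]
      refine ⟨B - A, ?_⟩
      intro p hp
      rcases hp with hp | hp | hp
      · exact ⟨0, by rw [hp]; simp⟩
      · exact ⟨1, by rw [hp, vadd_eq_add, one_smul]; abel⟩
      · exact ⟨⟪B - A, C - A⟫ / ‖B - A‖ ^ 2, by
          rw [hp, vadd_eq_add, ← hdec]; abel⟩
    exact (affineIndependent_iff_not_collinear.mp hABC) (by rwa [hr2])
  have habsD : |D| ≠ 0 := abs_ne_zero.mpr hD
  -- coordinates of the three points
  have hcoordP : ∀ P : E2,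
      b.coord 0 P • A + b.coord 1 P • B + b.coord 2 P • C = P := by
    intro P
    have h := b.linear_combination_coord_eq_self P
    rwa [Fin.sum_univ_three, hb0, hb1, hb2] at h
  have hsumP : ∀ P : E2, b.coord 0 P + b.coord 1 P + b.coord 2 P = 1 := by
    intro P
    have h := b.sum_coord_apply_eq_one P
    rwa [Fin.sum_univ_three] at h
  -- triSum values
  have hval : ∀ P : E2, P ∈ interior (convexHull ℝ ({A, B, C} : Set E2)) →
      triSum A B C P = |D| * (b.coord 0 P / ‖C - B‖ + b.coord 1 P / ‖C - A‖
        + b.coord 2 P / ‖B - A‖) :=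
    fun P hP => triSum_formula A B C P _ _ _ (hsumP P) (hcoordP P)
      (hposall P hP 0) (hposall P hP 1) (hposall P hP 2) hAB hAC hBC
  -- side lengths
  set a1 : ℝ := ‖C - B‖ with ha1
  set a2 : ℝ := ‖C - A‖ with ha2
  set a3 : ℝ := ‖B - A‖ with ha3
  have ha1p : 0 < a1 := norm_pos_iff.mpr (sub_ne_zero.mpr (Ne.symm hBC))
  have ha2p : 0 < a2 := norm_pos_iff.mpr (sub_ne_zero.mpr (Ne.symm hAC))
  have ha3p : 0 < a3 := norm_pos_iff.mpr (sub_ne_zero.mpr (Ne.symm hAB))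
  set α₁ := b.coord 0 P₁; set β₁ := b.coord 1 P₁; set γ₁ := b.coord 2 P₁
  set α₂ := b.coord 0 P₂; set β₂ := b.coord 1 P₂; set γ₂ := b.coord 2 P₂
  set α₃ := b.coord 0 P₃; set β₃ := b.coord 1 P₃; set γ₃ := b.coord 2 P₃
  have E12 : α₁ / a1 + β₁ / a2 + γ₁ / a3 = α₂ / a1 + β₂ / a2 + γ₂ / a3 := by
    have h := h12
    rw [hval P₁ hP₁, hval P₂ hP₂] at h
    exact mul_left_cancel₀ habsD h
  have E13 : α₁ / a1 + β₁ / a2 + γ₁ / a3 = α₃ / a1 + β₃ / a2 + γ₃ / a3 := by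
    have h := h12.trans h23
    rw [hval P₁ hP₁, hval P₃ hP₃] at h
    exact mul_left_cancel₀ habsD h
  set s₁ : ℝ := 1 / a1 - 1 / a3 with hs₁def
  set s₂ : ℝ := 1 / a2 - 1 / a3 with hs₂def
  have hu12 : s₁ * (α₂ - α₁) + s₂ * (β₂ - β₁) = 0 := by
    have h1 := hsumP P₁; have h2 := hsumP P₂
    rw [hs₁def, hs₂def]
    linear_combination (-1 : ℝ) * E12 + (1 / a3) * h1 - (1 / a3) * h2
  have hu13 : s₁ * (α₃ - α₁) + s₂ * (β₃ - β₁) = 0 := by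
    have h1 := hsumP P₁; have h3 := hsumP P₃
    rw [hs₁def, hs₂def]
    linear_combination (-1 : ℝ) * E13 + (1 / a3) * h1 - (1 / a3) * h3
  -- the linear functional
  set φ : E2 →ₗ[ℝ] ℝ := s₁ • (b.coord 0).linear + s₂ • (b.coord 1).linear with hφdef
  have hφeval : ∀ X Y : E2, φ (X - Y) =
      s₁ * (b.coord 0 X - b.coord 0 Y) + s₂ * (b.coord 1 X - b.coord 1 Y) := by
    intro X Y
    have l0 : (b.coord 0).linear (X - Y) = b.coord 0 X - b.coord 0 Y := by
      have := (b.coord 0).linearMap_vsub X Y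
      simpa [vsub_eq_sub] using this
    have l1 : (b.coord 1).linear (X - Y) = b.coord 1 X - b.coord 1 Y := by
      have := (b.coord 1).linearMap_vsub X Y
      simpa [vsub_eq_sub] using this
    rw [hφdef]
    simp only [LinearMap.add_apply, LinearMap.smul_apply, l0, l1, smul_eq_mul]
  have hφ21 : φ (P₂ - P₁) = 0 := by rw [hφeval]; linarith [hu12]
  have hφ31 : φ (P₃ - P₁) = 0 := by rw [hφeval]; linarith [hu13]
  -- vector span of the P's is everything
  have htopP : affineSpan ℝ (Set.range ![P₁, P₂, P₃]) = ⊤ :=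
    hind.affineSpan_eq_top_iff_card_eq_finrank_add_one.mpr
      (by simp [finrank_euclideanSpace_fin])
  have hvspan : vectorSpan ℝ (Set.range ![P₁, P₂, P₃]) = ⊤ := by
    rw [← direction_affineSpan, htopP, AffineSubspace.direction_top]
  -- φ vanishes everywhere
  have hg : ∀ i : Fin 3, φ (![P₁, P₂, P₃] i - P₁) = 0 := by
    intro i
    fin_cases i
    · simp
    · exact hφ21
    · exact hφ31
  have hker : vectorSpan ℝ (Set.range ![P₁, P₂, P₃]) ≤ LinearMap.ker φ := by
    rw [vectorSpan_def]
    rw [Submodule.span_le]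
    rintro z ⟨x, hx, y, hy, rfl⟩
    rcases hx with ⟨i, rfl⟩
    rcases hy with ⟨j, rfl⟩
    have : ![P₁, P₂, P₃] i -ᵥ ![P₁, P₂, P₃] j
        = (![P₁, P₂, P₃] i - P₁) - (![P₁, P₂, P₃] j - P₁) := by
      rw [vsub_eq_sub]; abel
    simp only [SetLike.mem_coe, LinearMap.mem_ker, this, map_sub, hg i, hg j, sub_zero]
  have hφ0 : ∀ v : E2, φ v = 0 := by
    intro v
    have : v ∈ LinearMap.ker φ := hker (by rw [hvspan]; trivial)
    exact this
  -- evaluate at A - C and B - C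
  have hs₁ : s₁ = 0 := by
    have h := hφ0 (A - C)
    rw [hφeval A C] at h
    rw [show b.coord 0 A = 1 by rw [← hb0]; exact b.coord_apply_eq 0,
      show b.coord 0 C = 0 by rw [← hb2]; exact b.coord_apply_ne (by decide),
      show b.coord 1 A = 0 by rw [← hb0]; exact b.coord_apply_ne (by decide),
      show b.coord 1 C = 0 by rw [← hb2]; exact b.coord_apply_ne (by decide)] at h
    linarith
  have hs₂ : s₂ = 0 := by
    have h := hφ0 (B - C)
    rw [hφeval B C] at h
    rw [show b.coord 0 B = 0 by rw [← hb1]; exact b.coord_apply_ne (by decide),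
      show b.coord 0 C = 0 by rw [← hb2]; exact b.coord_apply_ne (by decide),
      show b.coord 1 B = 1 by rw [← hb1]; exact b.coord_apply_eq 1,
      show b.coord 1 C = 0 by rw [← hb2]; exact b.coord_apply_ne (by decide)] at h
    linarith
  -- conclude equalities of side lengths
  have e13 : a1 = a3 := by
    rw [hs₁def] at hs₁
    have : 1 / a1 = 1 / a3 := by linarith
    field_simp at this
    linarith
  have e23 : a2 = a3 := by
    rw [hs₂def] at hs₂
    have : 1 / a2 = 1 / a3 := by linarith
    field_simp at this
    linarith
  have d1 : dist A B = a3 := by rw [dist_eq_norm, ha3, norm_sub_rev]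
  have d2 : dist B C = a1 := by rw [dist_eq_norm, ha1, norm_sub_rev]
  have d3 : dist C A = a2 := by rw [dist_eq_norm, ha2]
  refine ⟨?_, ?_⟩
  · rw [d1, d2, e13]
  · rw [d2, d3, e13, e23]
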